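/- Compact staging set rule (SP_c): Let f be locally Lipschitz, S ⊆ ℝⁿ compact, p a C¹ function with ∇p(y)·f(y) > 0 for all y ∈ S. Assume the solution remains in S as long as it has not entered P. Then the solution enters P in finite time within its existence interval. -/

import Mathlib

open scoped ENNReal NNReal
open Set Metric

/-- A locally Lipschitz function is Lipschitz on every compact set. -/
lemma locallyLipschitz_lipschitzOnWith_of_isCompact
    {E F : Type*} [MetricSpace E] [MetricSpace F] {f : E → F}
    (hf : LocallyLipschitz f) {K : Set E} (hK : IsCompact K) :
    ∃ L : ℝ≥0, LipschitzOnWith L f K := by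
  rcases K.eq_empty_or_nonempty with rfl | ⟨z, hz⟩
  · exact ⟨1, by simp⟩
  have hpt : ∀ x : E, ∃ (C : ℝ≥0) (r : ℝ), 0 < r ∧ LipschitzOnWith C f (ball x r) := by
    intro x
    obtain ⟨C, t, ht, hl⟩ := hf x
    obtain ⟨r, hr, hball⟩ := Metric.mem_nhds_iff.mp ht
    exact ⟨C, r, hr, hl.mono hball⟩
  choose C r hr hlip using hpt
  obtain ⟨s, hsK, hcov⟩ := hK.elim_nhds_subcover (fun x => ball x (r x / 2))
    (fun x _ => ball_mem_nhds x (by linarith [hr x]))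
  have hz' := hcov hz
  simp only [mem_iUnion, exists_prop] at hz'
  obtain ⟨i0, hi0, -⟩ := hz'
  have hs : s.Nonempty := ⟨i0, hi0⟩
  set r₀ : ℝ := s.inf' hs (fun x => r x / 2) with hr₀def
  have hr₀ : 0 < r₀ := by
    rw [hr₀def, Finset.lt_inf'_iff]
    intro b _; linarith [hr b]
  obtain ⟨M, hM⟩ := Metric.isBounded_iff.mp (hK.image hf.continuous).isBounded
  have hM0 : 0 ≤ M := by
    have := hM (mem_image_of_mem f hz) (mem_image_of_mem f hz)
    simpa using this
  refine ⟨s.sup C + ⟨M / r₀, div_nonneg hM0 hr₀.le⟩, ?_⟩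
  rw [lipschitzOnWith_iff_dist_le_mul]
  intro x hx y hy
  have hcoe : ((s.sup C + ⟨M / r₀, div_nonneg hM0 hr₀.le⟩ : ℝ≥0) : ℝ)
      = ((s.sup C : ℝ≥0) : ℝ) + M / r₀ := by push_cast; rfl
  rw [hcoe]
  by_cases hxy : dist x y < r₀
  · have hx' := hcov hx
    simp only [mem_iUnion, exists_prop] at hx'
    obtain ⟨i, hi, hxi⟩ := hx'
    rw [mem_ball] at hxi
    have hri : r₀ ≤ r i / 2 := Finset.inf'_le _ hi
    have hxi' : x ∈ ball i (r i) := mem_ball.mpr (by linarith [hr i])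
    have hyi : y ∈ ball i (r i) := by
      rw [mem_ball]
      have := dist_triangle y x i
      rw [dist_comm y x] at this
      linarith
    have h1 : dist (f x) (f y) ≤ (C i : ℝ) * dist x y :=
      (lipschitzOnWith_iff_dist_le_mul.mp (hlip i)) x hxi' y hyi
    have h2 : ((C i : ℝ≥0) : ℝ) ≤ ((s.sup C : ℝ≥0) : ℝ) := by
      exact_mod_cast Finset.le_sup hi
    nlinarith [dist_nonneg (x := x) (y := y), div_nonneg hM0 hr₀.le,
      NNReal.coe_nonneg (s.sup C)]
  · push_neg at hxy
    have h1 : dist (f x) (f y) ≤ M := hM (mem_image_of_mem f hx) (mem_image_of_mem f hy)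
    have h2 : M = (M / r₀) * r₀ := by field_simp
    have h3 : (M / r₀) * r₀ ≤ (M / r₀) * dist x y :=
      mul_le_mul_of_nonneg_left hxy (div_nonneg hM0 hr₀.le)
    nlinarith [dist_nonneg (x := x) (y := y), NNReal.coe_nonneg (s.sup C),
      mul_nonneg (NNReal.coe_nonneg (s.sup C)) (dist_nonneg (x := x) (y := y))]

/-- The hypotheses of the Picard–Lindelöf theorem, in the older form. -/
structure IsPicardLindelofOld {E : Type*} [NormedAddCommGroup E] (v : ℝ → E → E)
    (tMin t₀ tMax : ℝ) (x₀ : E) (L : ℝ≥0) (R C : ℝ) : Prop where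
  ht₀ : t₀ ∈ Icc tMin tMax
  hR : 0 ≤ R
  lipschitz : ∀ t ∈ Icc tMin tMax, LipschitzOnWith L (v t) (closedBall x₀ R)
  cont : ∀ x ∈ closedBall x₀ R, ContinuousOn (fun t : ℝ => v t x) (Icc tMin tMax)
  norm_le : ∀ t ∈ Icc tMin tMax, ∀ x ∈ closedBall x₀ R, ‖v t x‖ ≤ C
  C_mul_le_R : (C : ℝ) * max (tMax - t₀) (t₀ - tMin) ≤ R

/-- Picard–Lindelöf with the extra conclusion that the solution stays in the closed ball. -/
lemma isPicardLindelof_exists_solution_mem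
    {E : Type*} [NormedAddCommGroup E] [NormedSpace ℝ E] [CompleteSpace E] {v : ℝ → E → E}
    {tMin t₀ tMax : ℝ} (x₀ : E) {C R : ℝ} {L : ℝ≥0}
    (hpl : IsPicardLindelofOld v tMin t₀ tMax x₀ L R C) :
    ∃ f : ℝ → E, f t₀ = x₀ ∧ ∀ t ∈ Set.Icc tMin tMax,
      f t ∈ Metric.closedBall x₀ R ∧ HasDerivWithinAt f (v t (f t)) (Set.Icc tMin tMax) t := by
  have hC : 0 ≤ C := (norm_nonneg _).trans (hpl.norm_le t₀ hpl.ht₀ x₀ (mem_closedBall_self hpl.hR))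
  lift C to ℝ≥0 using hC
  lift R to ℝ≥0 using hpl.hR
  let t₀' : Icc tMin tMax := ⟨t₀, hpl.ht₀⟩
  have hf : IsPicardLindelof v t₀' x₀ R 0 C L :=
    { lipschitzOnWith := hpl.lipschitz
      continuousOn := hpl.cont
      norm_le := hpl.norm_le
      mul_max_le := by simpa using hpl.C_mul_le_R }
  obtain ⟨α, hα⟩ := ODE.FunSpace.exists_isFixedPt_next hf (mem_closedBall_self le_rfl)
  refine ⟨α.compProj, ?_, fun t ht => ⟨α.compProj_mem_closedBall hf.mul_max_le, ?_⟩⟩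
  · show α.compProj t₀' = x₀
    rw [ODE.FunSpace.compProj_val, ODE.FunSpace.apply_of_zero]
  · apply ODE.hasDerivWithinAt_picard_Icc t₀'.2 hf.continuousOn_uncurry
      α.continuous_compProj.continuousOn
      (fun _ _ ↦ α.compProj_mem_closedBall hf.mul_max_le) x₀ ht |>.congr_of_mem _ ht
    intro t' ht'
    nth_rw 1 [← hα]
    rw [ODE.FunSpace.compProj_of_mem ht', ODE.FunSpace.next_apply]

/-- Compact staging set rule SP_c: for a locally Lipschitz ODE with right-maximal
solution `φ` on `[0,T)`, if the solution stays in the compact set `S` as long as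
it has not entered `P`, and the C¹ function `p` has strictly positive Lie
derivative `∇p·f > 0` on `S`, then the solution enters `P` in finite time. -/
theorem staging_set_compact (n : ℕ) (f : (Fin n → ℝ) → (Fin n → ℝ))
    (hf : LocallyLipschitz f)
    (T : ℝ≥0∞) (hT : 0 < T) (φ : ℝ → (Fin n → ℝ))
    (hsol : ∀ t : ℝ, 0 ≤ t → ENNReal.ofReal t < T → HasDerivAt φ (f (φ t)) t)
    (hmax : ∀ (T' : ℝ) (ψ : ℝ → (Fin n → ℝ)), ψ 0 = φ 0 →
      (∀ t ∈ Set.Ico (0:ℝ) T', HasDerivAt ψ (f (ψ t)) t) → ENNReal.ofReal T' ≤ T)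
    (S P : Set (Fin n → ℝ)) (hSc : IsCompact S)
    (p : (Fin n → ℝ) → ℝ) (hp : ContDiff ℝ 1 p)
    (hstage : ∀ t : ℝ, 0 ≤ t → ENNReal.ofReal t < T →
      (∀ s ∈ Set.Icc (0:ℝ) t, φ s ∉ P) → φ t ∈ S)
    (hlie : ∀ y ∈ S, 0 < fderiv ℝ p y (f y)) :
    ∃ τ : ℝ, 0 ≤ τ ∧ ENNReal.ofReal τ < T ∧ φ τ ∈ P := by
  by_contra hcon
  push_neg at hcon
  have hS : ∀ t : ℝ, 0 ≤ t → ENNReal.ofReal t < T → φ t ∈ S := fun t ht hlt =>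
    hstage t ht hlt fun s hs => hcon s hs.1 (lt_of_le_of_lt (ENNReal.ofReal_le_ofReal hs.2) hlt)
  have h0T : ENNReal.ofReal 0 < T := by simpa using hT
  have hφ0 : φ 0 ∈ S := hS 0 le_rfl h0T
  have hSne : S.Nonempty := ⟨_, hφ0⟩
  have hfc : Continuous f := hf.continuous
  have hgc : Continuous fun y => fderiv ℝ p y (f y) :=
    (hp.continuous_fderiv one_ne_zero).clm_apply hfc
  obtain ⟨y₀, hy₀S, hy₀'⟩ := hSc.exists_isMinOn hSne hgc.continuousOn
  have hy₀ := isMinOn_iff.mp hy₀'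
  set ε := fderiv ℝ p y₀ (f y₀) with hεdef
  have hε : 0 < ε := hlie y₀ hy₀S
  obtain ⟨y₁, hy₁S, hy₁'⟩ := hSc.exists_isMaxOn hSne hp.continuous.continuousOn
  have hy₁ := isMaxOn_iff.mp hy₁'
  set B := (p y₁ - p (φ 0)) / ε with hBdef
  have hgrow : ∀ t : ℝ, 0 ≤ t → ENNReal.ofReal t < T → t ≤ B := by
    intro t ht hlt
    have hmem : ∀ s ∈ Icc (0:ℝ) t, ENNReal.ofReal s < T := fun s hs =>
      lt_of_le_of_lt (ENNReal.ofReal_le_ofReal hs.2) hlt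
    have hderiv : ∀ s ∈ Icc (0:ℝ) t, HasDerivAt (fun u => p (φ u) - ε * u)
        (fderiv ℝ p (φ s) (f (φ s)) - ε) s := by
      intro s hs
      have h1 : HasDerivAt φ (f (φ s)) s := hsol s hs.1 (hmem s hs)
      have h2 : HasDerivAt (fun u => p (φ u)) (fderiv ℝ p (φ s) (f (φ s))) s :=
        (hp.differentiable one_ne_zero (φ s)).hasFDerivAt.comp_hasDerivAt s h1
      have h3 : HasDerivAt (fun u : ℝ => ε * u) ε s := by
        simpa using (hasDerivAt_id s).const_mul ε
      exact h2.sub h3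
    have hmono : MonotoneOn (fun u => p (φ u) - ε * u) (Icc 0 t) := by
      apply monotoneOn_of_hasDerivWithinAt_nonneg (convex_Icc 0 t)
        (fun s hs => (hderiv s hs).continuousAt.continuousWithinAt)
        (fun s hs => ((hderiv s (interior_subset hs)).hasDerivWithinAt))
      intro s hs
      rw [interior_Icc] at hs
      have hsS : φ s ∈ S := hS s hs.1.le (hmem s ⟨hs.1.le, hs.2.le⟩)
      have := hy₀ (φ s) hsS
      linarith
    have h0t : (0:ℝ) ∈ Icc (0:ℝ) t := ⟨le_rfl, ht⟩
    have htt : t ∈ Icc (0:ℝ) t := ⟨ht, le_rfl⟩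
    have := hmono h0t htt ht
    have hub := hy₁ (φ t) (hS t ht hlt)
    rw [hBdef, le_div_iff₀ hε]
    simp only [mul_zero, sub_zero] at this
    nlinarith
  have hB0 : (0:ℝ) ≤ B := hgrow 0 le_rfl h0T
  have hTle : T ≤ ENNReal.ofReal B := by
    by_contra hlt
    push_neg at hlt
    obtain ⟨u, hu0, hu1, hu2⟩ := ENNReal.lt_iff_exists_real_btwn.mp hlt
    have hBu : B < u := by
      by_contra h
      push_neg at h
      exact absurd hu1 (not_lt.mpr (ENNReal.ofReal_le_ofReal h))
    exact absurd (hgrow u hu0 hu2) (not_le.mpr hBu)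
  have hTtop : T ≠ ⊤ := (lt_of_le_of_lt hTle ENNReal.ofReal_lt_top).ne
  set T₀ := T.toReal with hT₀def
  have hT₀pos : 0 < T₀ := ENNReal.toReal_pos hT.ne' hTtop
  have hltT : ∀ t : ℝ, t < T₀ → ENNReal.ofReal t < T := by
    intro t h
    have : ENNReal.ofReal t < ENNReal.ofReal T₀ :=
      (ENNReal.ofReal_lt_ofReal_iff hT₀pos).mpr h
    rwa [ENNReal.ofReal_toReal hTtop] at this
  set Kc := Metric.cthickening 1 S with hKcdef
  have hKcc : IsCompact Kc := hSc.cthickening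
  have hSKc : S ⊆ Kc := Metric.self_subset_cthickening S
  obtain ⟨L, hL⟩ := locallyLipschitz_lipschitzOnWith_of_isCompact hf hKcc
  obtain ⟨M₀, hM₀⟩ := hKcc.exists_bound_of_continuousOn hfc.continuousOn
  have hM₀0 : 0 ≤ M₀ := le_trans (norm_nonneg _) (hM₀ _ (hSKc hφ0))
  set δ := 1 / (M₀ + 1) with hδdef
  have hδpos : 0 < δ := by positivity
  set t₁ := max (T₀ - δ/2) (T₀/2) with ht₁def
  have ht₁pos : 0 < t₁ := lt_max_of_lt_right (by linarith)
  have ht₁lt : t₁ < T₀ := max_lt (by linarith) (by linarith)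
  have ht₁δ : T₀ < t₁ + δ := by
    have := le_max_left (T₀ - δ/2) (T₀/2)
    linarith
  set x₁ := φ t₁ with hx₁def
  have hx₁S : x₁ ∈ S := hS t₁ ht₁pos.le (hltT t₁ ht₁lt)
  have hball : closedBall x₁ 1 ⊆ Kc := closedBall_subset_cthickening hx₁S 1
  have hpl : IsPicardLindelofOld (fun _ => f) (t₁ - δ) t₁ (t₁ + δ) x₁ L 1 M₀ :=
    { ht₀ := ⟨by linarith, by linarith⟩
      hR := zero_le_one
      lipschitz := fun _ _ => hL.mono hball
      cont := fun _ _ => continuousOn_const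
      norm_le := fun _ _ x hx => hM₀ x (hball hx)
      C_mul_le_R := by
        rw [add_sub_cancel_left, sub_sub_cancel, max_self, hδdef]
        rw [mul_one_div, div_le_one (by linarith)]
        linarith }
  obtain ⟨α, hα₁, hα⟩ := isPicardLindelof_exists_solution_mem x₁ hpl
  set t₂ := (t₁ + T₀)/2 with ht₂def
  have ht₂1 : t₁ < t₂ := by rw [ht₂def]; linarith
  have ht₂2 : t₂ < T₀ := by rw [ht₂def]; linarith
  have ht₂pos : 0 < t₂ := by linarith
  have hsub : Icc t₁ t₂ ⊆ Icc (t₁ - δ) (t₁ + δ) :=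
    Icc_subset_Icc (by linarith) (by linarith)
  have hsub' : Icc t₁ t₂ ⊆ Ioo (t₁ - δ) (t₁ + δ) := fun u hu =>
    ⟨by have := hu.1; linarith, by have := hu.2; linarith⟩
  have hαderiv : ∀ t ∈ Ioo (t₁ - δ) (t₁ + δ), HasDerivAt α (f (α t)) t := fun t ht =>
    ((hα t (Ioo_subset_Icc_self ht)).2).hasDerivAt (Icc_mem_nhds ht.1 ht.2)
  have hφcont : ContinuousOn φ (Icc t₁ t₂) := fun t ht =>
    ((hsol t (le_trans ht₁pos.le ht.1)
      (hltT t (lt_of_le_of_lt ht.2 ht₂2))).continuousAt).continuousWithinAt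
  have heq : Set.EqOn φ α (Icc t₁ t₂) := by
    apply ODE_solution_unique_of_mem_Icc_right
      (v := fun _ => f) (s := fun _ => Kc) (fun _ _ => hL) hφcont
    · intro t ht
      exact (hsol t (le_trans ht₁pos.le ht.1)
        (hltT t (lt_of_lt_of_le ht.2 ht₂2.le))).hasDerivWithinAt
    · intro t ht
      exact hSKc (hS t (le_trans ht₁pos.le ht.1) (hltT t (lt_of_lt_of_le ht.2 ht₂2.le)))
    · exact fun t ht => ((hαderiv t (hsub' ht)).continuousAt).continuousWithinAt
    · intro t ht
      exact (hαderiv t (hsub' (Ico_subset_Icc_self ht))).hasDerivWithinAt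
    · intro t ht
      exact hball (hα t (hsub (Ico_subset_Icc_self ht))).1
    · exact hα₁.symm
  set ψ : ℝ → (Fin n → ℝ) := fun t => if t < t₂ then φ t else α t with hψdef
  have hψ0 : ψ 0 = φ 0 := if_pos ht₂pos
  have hψderiv : ∀ t ∈ Ico (0:ℝ) (t₁ + δ), HasDerivAt ψ (f (ψ t)) t := by
    intro t ht
    by_cases h : t < t₂
    · have hev : ψ =ᶠ[nhds t] φ := by
        filter_upwards [Iio_mem_nhds h] with u hu
        exact if_pos hu
      have hψt : ψ t = φ t := if_pos h
      rw [hψt]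
      exact (hsol t ht.1 (hltT t (h.trans ht₂2))).congr_of_eventuallyEq hev
    · push_neg at h
      have hev : ψ =ᶠ[nhds t] α := by
        filter_upwards [Ioo_mem_nhds (show t₁ < t by linarith) ht.2] with u hu
        by_cases h' : u < t₂
        · have := heq (⟨hu.1.le, h'.le⟩ : u ∈ Icc t₁ t₂)
          simpa [hψdef, if_pos h'] using this
        · exact if_neg h'
      have hψt : ψ t = α t := if_neg (not_lt.mpr h)
      rw [hψt]
      exact (hαderiv t ⟨by linarith, ht.2⟩).congr_of_eventuallyEq hev
  have hle := hmax (t₁ + δ) ψ hψ0 hψderiv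
  rw [← ENNReal.ofReal_toReal hTtop] at hle
  have : t₁ + δ ≤ T₀ := (ENNReal.ofReal_le_ofReal_iff hT₀pos.le).mp hle
  linarith
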